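/- (Theorem 3, optimal joint activity–offset coordinate update.) Let X be a nonempty finite set, κ > 0, and let α : X → ℝ with α(x) > 0 for all x, and β, η : X → ℝ. Define F(a, x) = log(1 + α(x)a) + (κα(x)a² − (β(x)+η(x))a)/(1 + α(x)a) for (a, x) ∈ [0,1] × X. For each x ∈ X define d(x) = min{max{d̂(x), 0}, 1} if 4κ(κ+β(x)+η(x)) + α(x)² > 0, where d̂(x) = (−α(x) − 2κ + √(4κ(κ+β(x)+η(x)) + α(x)²))/(2κα(x)), and d(x) = 0 otherwise; and define h(x) = F(d(x), x). Then for any x* ∈ argmin_{x ∈ X} h(x), the pair (d(x*), x*) is a global minimizer of F over [0,1] × X, i.e., F(d(x*), x*) ≤ F(a, x) for all a ∈ [0,1] and x ∈ X. -/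

import Mathlib

open Real Set

private lemma key8 (κ α β η : ℝ) (hκ : 0 < κ) (hα : 0 < α) :
    ∀ a ∈ Set.Icc (0:ℝ) 1,
      (fun a => Real.log (1 + α * a) + (κ * α * a ^ 2 - (β + η) * a) / (1 + α * a))
        (if 0 < 4 * κ * (κ + β + η) + α ^ 2 then
          min (max ((-α - 2 * κ + Real.sqrt (4 * κ * (κ + β + η) + α ^ 2)) / (2 * κ * α)) 0) 1
        else 0) ≤
      (fun a => Real.log (1 + α * a) + (κ * α * a ^ 2 - (β + η) * a) / (1 + α * a)) a := by
  set f : ℝ → ℝ := fun a => Real.log (1 + α * a) + (κ * α * a ^ 2 - (β + η) * a) / (1 + α * a)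
    with hf
  set q : ℝ → ℝ := fun a => κ*α^2*a^2 + α^2*a + 2*κ*α*a + α - (β + η) with hq
  have hderiv : ∀ a : ℝ, 0 ≤ a → HasDerivAt f (q a / (1 + α*a)^2) a := by
    intro a ha
    have h1 : (0:ℝ) < 1 + α * a := by nlinarith
    have hu : HasDerivAt (fun a : ℝ => 1 + α * a) α a := by
      simpa using ((hasDerivAt_id a).const_mul α).const_add 1
    have hlog := hu.log h1.ne'
    have h2 : HasDerivAt (fun a : ℝ => a^2) (2*a) a := by simpa using hasDerivAt_pow 2 a
    have hnum : HasDerivAt (fun a : ℝ => κ*α*a^2 - (β+η)*a) ((κ*α)*(2*a) - (β+η)*1) a :=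
      (h2.const_mul (κ*α)).sub ((hasDerivAt_id a).const_mul (β+η))
    have hdiv := hnum.div hu h1.ne'
    have := hlog.add hdiv
    refine this.congr_deriv ?_
    field_simp
    ring
  have hcont : ∀ lo hi : ℝ, 0 ≤ lo → ContinuousOn f (Icc lo hi) := fun lo hi hlo a ha =>
    ((hderiv a (hlo.trans ha.1)).differentiableAt.continuousAt).continuousWithinAt
  have hmono : ∀ lo hi : ℝ, 0 ≤ lo → (∀ b, lo ≤ b → b ≤ hi → 0 ≤ q b) →
      MonotoneOn f (Icc lo hi) := by
    intro lo hi hlo hsign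
    apply monotoneOn_of_deriv_nonneg (convex_Icc lo hi) (hcont lo hi hlo)
    · intro b hb
      rw [interior_Icc] at hb
      exact ((hderiv b (hlo.trans hb.1.le)).differentiableAt).differentiableWithinAt
    · intro b hb
      rw [interior_Icc] at hb
      rw [(hderiv b (hlo.trans hb.1.le)).deriv]
      exact div_nonneg (hsign b hb.1.le hb.2.le) (sq_nonneg _)
  have hanti : ∀ lo hi : ℝ, 0 ≤ lo → (∀ b, lo ≤ b → b ≤ hi → q b ≤ 0) →
      AntitoneOn f (Icc lo hi) := by
    intro lo hi hlo hsign
    apply antitoneOn_of_deriv_nonpos (convex_Icc lo hi) (hcont lo hi hlo)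
    · intro b hb
      rw [interior_Icc] at hb
      exact ((hderiv b (hlo.trans hb.1.le)).differentiableAt).differentiableWithinAt
    · intro b hb
      rw [interior_Icc] at hb
      rw [(hderiv b (hlo.trans hb.1.le)).deriv]
      exact div_nonpos_of_nonpos_of_nonneg (hsign b hb.1.le hb.2.le) (sq_nonneg _)
  intro a ha
  by_cases hpos : 0 < 4 * κ * (κ + β + η) + α ^ 2
  · simp only [if_pos hpos]
    set s := Real.sqrt (4 * κ * (κ + β + η) + α ^ 2) with hs
    have hs2 : s^2 = 4 * κ * (κ + β + η) + α ^ 2 := Real.sq_sqrt hpos.le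
    have hs0 : 0 ≤ s := Real.sqrt_nonneg _
    have h2κα : (0:ℝ) < 2*κ*α := by positivity
    set r := (-α - 2*κ + s) / (2*κ*α) with hr
    have hqpos : ∀ b, r ≤ b → 0 ≤ q b := by
      intro b hb
      rw [hr, div_le_iff₀ h2κα] at hb
      simp only [hq]
      nlinarith [hs2, hs0, hκ, hα, sq_nonneg (2*κ*α*b + α + 2*κ - s)]
    have hqneg : ∀ b, 0 ≤ b → b ≤ r → q b ≤ 0 := by
      intro b hb0 hbr
      rw [hr, le_div_iff₀ h2κα] at hbr
      have ht1 : 2*κ*α*b + α + 2*κ ≤ s := by linarith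
      have ht2 : (0:ℝ) ≤ 2*κ*α*b + α + 2*κ + s := by nlinarith
      simp only [hq]
      nlinarith [mul_nonneg (sub_nonneg.mpr ht1) ht2]
    rcases le_or_gt r 0 with hr0 | hr0
    · have hd : min (max r 0) 1 = 0 := by
        rw [max_eq_right hr0, min_eq_left zero_le_one]
      rw [hd]
      exact hmono 0 1 le_rfl (fun b hb _ => hqpos b (hr0.trans hb))
        ⟨le_rfl, zero_le_one⟩ ha ha.1
    rcases le_or_gt 1 r with hr1 | hr1
    · have hd : min (max r 0) 1 = 1 := by
        rw [max_eq_left hr0.le, min_eq_right hr1]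
      rw [hd]
      exact hanti 0 1 le_rfl (fun b hb hb1 => hqneg b hb (hb1.trans hr1))
        ha ⟨zero_le_one, le_rfl⟩ ha.2
    · have hd : min (max r 0) 1 = r := by
        rw [max_eq_left hr0.le, min_eq_left hr1.le]
      rw [hd]
      rcases le_or_gt a r with har | har
      · exact hanti 0 r le_rfl (fun b hb hbr => hqneg b hb hbr)
          ⟨ha.1, har⟩ ⟨hr0.le, le_rfl⟩ har
      · exact hmono r 1 hr0.le (fun b hb _ => hqpos b hb)
          ⟨le_rfl, hr1.le⟩ ⟨har.le, ha.2⟩ har.le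
  · simp only [if_neg hpos]
    have hΔ : 4 * κ * (κ + β + η) + α ^ 2 ≤ 0 := not_lt.1 hpos
    have hq0 : ∀ b, 0 ≤ b → b ≤ 1 → 0 ≤ q b := by
      intro b _ _
      simp only [hq]
      nlinarith [sq_nonneg (2*κ*α*b + α + 2*κ), hκ]
    exact hmono 0 1 le_rfl hq0 ⟨le_rfl, zero_le_one⟩ ha ha.1

theorem stmt_8 {X : Type*} [Fintype X] [Nonempty X]
    (κ : ℝ) (hκ : 0 < κ) (α β η : X → ℝ) (hα : ∀ x, 0 < α x) :
    let F : ℝ → X → ℝ := fun a x =>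
      Real.log (1 + α x * a) + (κ * α x * a ^ 2 - (β x + η x) * a) / (1 + α x * a)
    let d : X → ℝ := fun x =>
      if 0 < 4 * κ * (κ + β x + η x) + α x ^ 2 then
        min (max ((-α x - 2 * κ + Real.sqrt (4 * κ * (κ + β x + η x) + α x ^ 2)) / (2 * κ * α x)) 0) 1
      else 0
    ∀ xstar : X, (∀ x, F (d xstar) xstar ≤ F (d x) x) →
      ∀ a ∈ Set.Icc (0 : ℝ) 1, ∀ x, F (d xstar) xstar ≤ F a x := by
  intro F d xstar hmin a ha x
  exact le_trans (hmin x) (key8 κ (α x) (β x) (η x) hκ (hα x) a ha)
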